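/- For a solution (r(t), θ(t)) of the Kepler polar equations with k > 0, L = θ' r² ≠ 0, and energy E with k² - 2|E|L² > 0 when E < 0, the quantity Θ = θ + arctan((L² - k r)/(L r' r)) is constant in time on any interval where r' ≠ 0. -/

import Mathlib

/-- For the Kepler problem, `Θ = θ + arctan((L² - kr)/(L r' r))` is constant on
any interval where `r' ≠ 0`. -/
theorem kepler_angular_quantity_constant (k a b L E : ℝ) (hk : 0 < k) (hL : L ≠ 0)
    (r θ : ℝ → ℝ) (hrC : ContDiff ℝ 2 r) (hθC : ContDiff ℝ 2 θ)
    (hrpos : ∀ t ∈ Set.Ioo a b, 0 < r t)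
    (hrv : ∀ t ∈ Set.Ioo a b, deriv r t ≠ 0)
    (heom1 : ∀ t ∈ Set.Ioo a b,
      deriv (deriv r) t = r t * (deriv θ t) ^ 2 - k / (r t) ^ 2)
    (heom2 : ∀ t ∈ Set.Ioo a b,
      deriv (deriv θ) t = -2 * deriv θ t * deriv r t / r t)
    (hLdef : ∀ t ∈ Set.Ioo a b, deriv θ t * (r t) ^ 2 = L)
    (hEdef : ∀ t ∈ Set.Ioo a b,
      (deriv r t) ^ 2 / 2 + L ^ 2 / (2 * (r t) ^ 2) - k / r t = E)
    (hEneg : E < 0 → 0 < k ^ 2 - 2 * |E| * L ^ 2) :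
    ∀ t₁ ∈ Set.Ioo a b, ∀ t₂ ∈ Set.Ioo a b,
      θ t₁ + Real.arctan ((L ^ 2 - k * r t₁) / (L * deriv r t₁ * r t₁))
      = θ t₂ + Real.arctan ((L ^ 2 - k * r t₂) / (L * deriv r t₂ * r t₂)) := by
  intro t₁ ht₁ t₂ ht₂
  set s := Set.Ioo a b with hs
  set g : ℝ → ℝ := fun t =>
    θ t + Real.arctan ((L ^ 2 - k * r t) / (L * deriv r t * r t)) with hg
  have hopen : IsOpen s := isOpen_Ioo
  have key : ∀ t ∈ s, HasDerivAt g 0 t := by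
    intro t ht
    have hrt := hrpos t ht
    have hrvt := hrv t ht
    have hθval : deriv θ t = L / r t ^ 2 := by
      have := hLdef t ht
      field_simp at this ⊢
      linarith
    have hr'' : deriv (deriv r) t = L ^ 2 / r t ^ 3 - k / r t ^ 2 := by
      have h2 := heom1 t ht
      rw [hθval] at h2
      rw [h2]
      field_simp
    have hr' : HasDerivAt r (deriv r t) t :=
      ((hrC.differentiable (by norm_num)) t).hasDerivAt
    have hrd : Differentiable ℝ (deriv r) := by
      have := (hrC.iterate_deriv' 1 1).differentiable one_ne_zero
      simpa using this
    have hr2 : HasDerivAt (deriv r) (deriv (deriv r) t) t := (hrd t).hasDerivAt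
    have hθ' : HasDerivAt θ (deriv θ t) t :=
      ((hθC.differentiable (by norm_num)) t).hasDerivAt
    have hu : HasDerivAt (fun t => L ^ 2 - k * r t) (-(k * deriv r t)) t := by
      exact ((hasDerivAt_const t (L ^ 2)).sub (hr'.const_mul k)).congr_deriv (by ring)
    have hv : HasDerivAt (fun t => L * deriv r t * r t)
        (L * deriv (deriv r) t * r t + L * deriv r t * deriv r t) t :=
      (hr2.const_mul L).mul hr'
    have hvne : L * deriv r t * r t ≠ 0 :=
      mul_ne_zero (mul_ne_zero hL hrvt) (ne_of_gt hrt)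
    have hf := hu.div hv hvne
    have harc := (Real.hasDerivAt_arctan
        ((L ^ 2 - k * r t) / (L * deriv r t * r t))).comp t hf
    have htot := hθ'.add harc
    refine htot.congr_deriv (Eq.symm ?_)
    rw [hθval, hr'']
    have h1 : (0:ℝ) < 1 + ((L ^ 2 - k * r t) / (L * deriv r t * r t)) ^ 2 := by positivity
    field_simp
    ring
  have hd : DifferentiableOn ℝ g s := fun t ht => (key t ht).differentiableAt.differentiableWithinAt
  have hfd : ∀ t ∈ s, fderivWithin ℝ g s t = 0 := by
    intro t ht
    rw [fderivWithin_of_isOpen hopen ht, (key t ht).hasFDerivAt.fderiv]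
    ext x
    simp
  have := (convex_Ioo a b).is_const_of_fderivWithin_eq_zero hd hfd ht₁ ht₂
  exact this
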